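/- arXiv:2411.08829 — 2 statements merged into one kernel-verified Lean document; each statement's English description precedes it below -/
import Mathlib

section
/- Let N ≥ 2 and let Ω = ∏_{i=1}^N (a_i, b_i) be a bounded open box (rectangular domain) in ℝ^N. Let p_1, …, p_N be real constants with N < p_i < ∞ for every i, and set β_i = (1 − Σ_{j=1}^N 1/p_j) / (1 − Σ_{j=1}^N 1/p_j + N/p_i) for i = 1, …, N. Then there exists a constant C > 0 such that for every function u that is continuously differentiable on the closed box Ω̄ and all x, y ∈ Ω̄, one has |u(x) − u(y)| ≤ C · ( ‖u‖_{L^{p_M}(Ω)} + Σ_{i=1}^N ‖∂_{x_i} u‖_{L^{p_i}(Ω)} ) · Σ_{i=1}^N |x_i − y_i|^{β_i}, where p_M = max_{1≤i≤N} p_i. -/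
open MeasureTheory

set_option maxHeartbeats 1600000

section AnisoMorreyAux

open Set

variable {N : ℕ}

lemma uniqueDiffOn_Icc_pi (a b : Fin N → ℝ) (hab : ∀ i, a i < b i) :
    UniqueDiffOn ℝ (Set.Icc a b) := by
  rw [← Set.pi_univ_Icc]
  exact UniqueDiffOn.pi fun i _ => uniqueDiffOn_Icc (hab i)

lemma ftc_bound (a b : Fin N → ℝ)
    (u : (Fin N → ℝ) → ℝ) (hu : ContDiffOn ℝ 1 u (Set.Icc a b))
    (hab : ∀ i, a i < b i)
    (c r : Fin N → ℝ) (hr : ∀ i, 0 ≤ r i)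
    (hsub : Set.Icc c (fun i => c i + r i) ⊆ Set.Icc a b)
    (x z : Fin N → ℝ) (hx : x ∈ Set.Icc c (fun i => c i + r i))
    (hz : z ∈ Set.Icc c (fun i => c i + r i)) :
    |u z - u x| ≤ ∑ i, r i * ∫ t in (0:ℝ)..1,
      ‖fderivWithin ℝ u (Set.Icc a b) (x + t • (z - x)) (Pi.single i 1)‖ := by
  set S := Set.Icc a b with hS
  set R := Set.Icc c (fun i => c i + r i) with hRdef
  have hRS : R ⊆ S := hsub
  have hconv : Convex ℝ R := convex_Icc _ _
  have hud : UniqueDiffOn ℝ S := uniqueDiffOn_Icc_pi a b hab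
  set γ : ℝ → (Fin N → ℝ) := fun t => x + t • (z - x) with hγ
  have hγcont : Continuous γ := by fun_prop
  have hγmem : ∀ t ∈ Set.Icc (0:ℝ) 1, γ t ∈ R := by
    intro t ht
    have h := hconv hx hz (by linarith [ht.2] : (0:ℝ) ≤ 1 - t) ht.1 (by ring)
    have : γ t = (1 - t) • x + t • z := by
      simp only [hγ]; module
    rw [this]; exact h
  have hγS : ∀ t ∈ Set.Icc (0:ℝ) 1, γ t ∈ S := fun t ht => hRS (hγmem t ht)
  have hDer : ContinuousOn (fderivWithin ℝ u S) S :=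
    hu.continuousOn_fderivWithin hud le_rfl
  set D : ℝ → ℝ := fun τ => fderivWithin ℝ u S (γ τ) (z - x) with hD
  have hDγcont : ContinuousOn (fun τ => fderivWithin ℝ u S (γ τ)) (Set.Icc (0:ℝ) 1) :=
    hDer.comp hγcont.continuousOn hγS
  have hcontD : ContinuousOn D (Set.Icc (0:ℝ) 1) := hDγcont.clm_apply continuousOn_const
  have hF : ∀ τ ∈ Set.Icc (0:ℝ) 1, HasDerivWithinAt (u ∘ γ) (D τ) (Set.Icc (0:ℝ) 1) τ := by
    intro τ hτ
    have h1 : HasDerivWithinAt γ (z - x) (Set.Icc (0:ℝ) 1) τ := by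
      have : HasDerivAt γ (z - x) τ := by
        have h := ((hasDerivAt_id τ).smul_const (z - x)).const_add x
        simp only [id, one_smul] at h
        exact h
      exact this.hasDerivWithinAt
    have h2 : HasFDerivWithinAt u (fderivWithin ℝ u S (γ τ)) S (γ τ) :=
      ((hu.differentiableOn one_ne_zero) (γ τ) (hγS τ hτ)).hasFDerivWithinAt
    exact h2.comp_hasDerivWithinAt τ h1 hγS
  have hγ1 : γ 1 = z := by simp [hγ]
  have hγ0 : γ 0 = x := by simp [hγ]
  have hint : IntervalIntegrable D volume 0 1 := by
    apply ContinuousOn.intervalIntegrable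
    rwa [Set.uIcc_of_le zero_le_one]
  have hftc : ∫ τ in (0:ℝ)..1, D τ = u z - u x := by
    have := intervalIntegral.integral_eq_sub_of_hasDeriv_right_of_le zero_le_one
      (hu.continuousOn.comp hγcont.continuousOn hγS)
      (fun τ hτ => (hF τ (Ioo_subset_Icc_self hτ)).mono_of_mem_nhdsWithin
        (Icc_mem_nhdsGT_of_mem ⟨hτ.1.le, hτ.2⟩)) hint
    simpa [hγ1, hγ0] using this
  have hgicont : ∀ i : Fin N, ContinuousOn
      (fun τ => r i * ‖fderivWithin ℝ u S (γ τ) (Pi.single i 1)‖) (Set.Icc (0:ℝ) 1) :=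
    fun i => continuousOn_const.mul (hDγcont.clm_apply continuousOn_const).norm
  have hintg : ∀ i : Fin N, IntervalIntegrable
      (fun τ => r i * ‖fderivWithin ℝ u S (γ τ) (Pi.single i 1)‖) volume 0 1 := by
    intro i
    apply ContinuousOn.intervalIntegrable
    rw [Set.uIcc_of_le zero_le_one]; exact hgicont i
  have key : |u z - u x| ≤ ∫ τ in (0:ℝ)..1,
      ∑ i, r i * ‖fderivWithin ℝ u S (γ τ) (Pi.single i 1)‖ := by
    rw [← hftc, ← Real.norm_eq_abs]
    refine (intervalIntegral.norm_integral_le_integral_norm zero_le_one).trans ?_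
    refine intervalIntegral.integral_mono_on (f := fun τ => ‖D τ‖)
      (g := fun τ => ∑ i, r i * ‖fderivWithin ℝ u S (γ τ) (Pi.single i 1)‖)
      zero_le_one ?_ ?_ ?_
    · apply ContinuousOn.intervalIntegrable
      rw [Set.uIcc_of_le zero_le_one]; exact hcontD.norm
    · apply ContinuousOn.intervalIntegrable
      rw [Set.uIcc_of_le zero_le_one]
      exact continuousOn_finset_sum _ fun i _ => hgicont i
    · intro τ hτ
      have hzx : z - x = ∑ i, (z i - x i) • (Pi.single i (1:ℝ) : Fin N → ℝ) := by
        have h1 : ∑ i, Pi.single i ((z - x) i) = z - x := Finset.univ_sum_single (z - x)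
        rw [← h1]
        refine Finset.sum_congr rfl fun i _ => ?_
        rw [Pi.sub_apply]
        rw [← Pi.single_smul, smul_eq_mul, mul_one]
      calc ‖D τ‖ = ‖∑ i, (z i - x i) • fderivWithin ℝ u S (γ τ) (Pi.single i 1)‖ := by
            have hDτ : D τ = ∑ i, (z i - x i) • fderivWithin ℝ u S (γ τ) (Pi.single i 1) := by
              show fderivWithin ℝ u S (γ τ) (z - x) = _
              rw [hzx, _root_.map_sum]
              exact Finset.sum_congr rfl fun i _ => (fderivWithin ℝ u S (γ τ)).map_smul _ _
            rw [hDτ]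
      _ ≤ ∑ i, ‖(z i - x i) • fderivWithin ℝ u S (γ τ) (Pi.single i 1)‖ :=
            norm_sum_le _ _
      _ ≤ ∑ i, r i * ‖fderivWithin ℝ u S (γ τ) (Pi.single i 1)‖ := by
            refine Finset.sum_le_sum fun i _ => ?_
            rw [norm_smul]
            apply mul_le_mul_of_nonneg_right _ (norm_nonneg _)
            have hz2 : z i ≤ c i + r i := hz.2 i
            have hz1 : c i ≤ z i := hz.1 i
            have hx2 : x i ≤ c i + r i := hx.2 i
            have hx1 : c i ≤ x i := hx.1 i
            rw [Real.norm_eq_abs, abs_sub_le_iff]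
            constructor
            · linarith
            · linarith
  calc |u z - u x| ≤ _ := key
  _ = ∑ i, ∫ τ in (0:ℝ)..1, r i * ‖fderivWithin ℝ u S (γ τ) (Pi.single i 1)‖ :=
        intervalIntegral.integral_finset_sum fun i _ => hintg i
  _ = ∑ i, r i * ∫ τ in (0:ℝ)..1, ‖fderivWithin ℝ u S (γ τ) (Pi.single i 1)‖ := by
        simp [intervalIntegral.integral_const_mul]

lemma rect_bound (hN : 0 < N) (a b : Fin N → ℝ) (hab : ∀ i, a i < b i)
    (p : Fin N → ℝ) (hp : ∀ i, (N:ℝ) < p i)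
    (u : (Fin N → ℝ) → ℝ) (hu : ContDiffOn ℝ 1 u (Set.Icc a b))
    (c r : Fin N → ℝ) (hr : ∀ i, 0 < r i)
    (hsub : Set.Icc c (fun i => c i + r i) ⊆ Set.Icc a b)
    (x : Fin N → ℝ) (hx : x ∈ Set.Icc c (fun i => c i + r i)) :
    |u x * (∏ i, r i) - ∫ z in Set.Icc c (fun i => c i + r i), u z|
      ≤ ∑ i, r i * ((1 - N / p i)⁻¹
          * ((eLpNorm (fun z => fderivWithin ℝ u (Set.Icc a b) z (Pi.single i 1))
              (ENNReal.ofReal (p i)) (volume.restrict (Set.Icc a b))).toReal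
          * (∏ j, r j) ^ (1 - 1 / p i))) := by
  have hNpos : (0:ℝ) < N := by exact_mod_cast hN
  have hppos : ∀ i, 0 < p i := fun i => lt_trans hNpos (hp i)
  have h1p : ∀ i, 1 < p i := fun i =>
    lt_of_le_of_lt (by exact_mod_cast hN : (1:ℝ) ≤ (N:ℝ)) (hp i)
  set S := Set.Icc a b with hSdef
  set R := Set.Icc c (fun i => c i + r i) with hRdef
  set v : Fin N → (Fin N → ℝ) → ℝ :=
    fun i z => fderivWithin ℝ u S z (Pi.single i 1) with hvdef
  set B : Fin N → ENNReal :=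
    fun i => eLpNorm (v i) (ENNReal.ofReal (p i)) (volume.restrict S) with hBdef
  have hRmeas : MeasurableSet R := measurableSet_Icc
  have hRcomp : IsCompact R := isCompact_Icc
  have hScomp : IsCompact S := isCompact_Icc
  have hcle : c ≤ fun i => c i + r i := fun i => show c i ≤ c i + r i from le_add_of_nonneg_right (hr i).le
  have hconv : Convex ℝ R := convex_Icc _ _
  have hud : UniqueDiffOn ℝ S := uniqueDiffOn_Icc_pi a b hab
  have hDer : ContinuousOn (fderivWithin ℝ u S) S :=
    hu.continuousOn_fderivWithin hud le_rfl
  have hvcont : ∀ i, ContinuousOn (v i) S :=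
    fun i => hDer.clm_apply continuousOn_const
  have hRfin : volume R < ⊤ := hRcomp.measure_lt_top
  have hSfin : volume S < ⊤ := hScomp.measure_lt_top
  have hVtoReal : (volume R).toReal = ∏ i, r i := by
    rw [hRdef, Real.volume_Icc_pi_toReal hcle]
    simp
  -- B i is finite
  have hBfin : ∀ i, B i ≠ ⊤ := by
    intro i
    obtain ⟨M, hM⟩ := hScomp.exists_bound_of_continuousOn (hvcont i)
    have hae : ∀ᵐ z ∂(volume.restrict S), ‖v i z‖ ≤ M := by
      filter_upwards [ae_restrict_mem measurableSet_Icc] with z hz using hM z hz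
    refine ne_top_of_le_ne_top ?_ (eLpNorm_le_of_ae_bound hae)
    exact ENNReal.mul_ne_top
      (ENNReal.rpow_ne_top_of_nonneg (by positivity)
        (by simpa [Measure.restrict_apply_univ] using hSfin.ne)) ENNReal.ofReal_ne_top
  -- membership of the homothety images
  have hmemR : ∀ t ∈ Set.Icc (0:ℝ) 1, ∀ z ∈ R, x + t • (z - x) ∈ R := by
    intro t ht z hz
    have h := hconv hx hz (by linarith [ht.2] : (0:ℝ) ≤ 1 - t) ht.1 (by ring)
    have : x + t • (z - x) = (1 - t) • x + t • z := by module
    rw [this]; exact h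
  -- pointwise FTC bound in ENNReal form
  have hpt : ∀ z ∈ R, (‖u x - u z‖₊ : ENNReal) ≤
      ∑ i, ENNReal.ofReal (r i) *
        ∫⁻ t in Set.Ioc (0:ℝ) 1, (‖v i (x + t • (z - x))‖₊ : ENNReal) := by
    intro z hz
    have h0 := ftc_bound a b u hu hab c r (fun i => (hr i).le) hsub x z hx hz
    have hGnn : ∀ i : Fin N, 0 ≤ ∫ t in (0:ℝ)..1, ‖v i (x + t • (z - x))‖ :=
      fun i => intervalIntegral.integral_nonneg zero_le_one (fun t _ => norm_nonneg _)
    have h1 : (‖u x - u z‖₊ : ENNReal) = ENNReal.ofReal |u z - u x| := by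
      rw [abs_sub_comm, ← Real.norm_eq_abs, ofReal_norm, enorm_eq_nnnorm]
    rw [h1]
    refine le_trans (ENNReal.ofReal_le_ofReal h0) ?_
    rw [ENNReal.ofReal_sum_of_nonneg (fun i _ => mul_nonneg (hr i).le (hGnn i))]
    refine Finset.sum_le_sum fun i _ => ?_
    rw [ENNReal.ofReal_mul (hr i).le]
    refine mul_le_mul_right ?_ _
    have h2 : (∫ t in (0:ℝ)..1, ‖v i (x + t • (z - x))‖)
        = ∫ t in Set.Ioc (0:ℝ) 1, ‖v i (x + t • (z - x))‖ ∂volume :=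
      intervalIntegral.integral_of_le zero_le_one
    rw [h2]
    refine le_trans (Real.ofReal_le_enorm _) ?_
    refine le_trans (enorm_integral_le_lintegral_enorm _) ?_
    refine le_of_eq (lintegral_congr fun t => ?_)
    rw [enorm_norm, enorm_eq_nnnorm]

  -- swap, Hölder, scaling: the main lintegral estimate
  have hmain : ∫⁻ z in R, (‖u x - u z‖₊ : ENNReal) ∂volume ≤
      ∑ i, ENNReal.ofReal (r i) * (ENNReal.ofReal ((1 - N / p i)⁻¹)
        * (B i * (volume R) ^ (1 - 1 / p i))) := by
    classical
    have hφcont : Continuous (fun q : (Fin N → ℝ) × ℝ => x + q.2 • (q.1 - x)) := by fun_prop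
    have hmapsTo : Set.MapsTo (fun q : (Fin N → ℝ) × ℝ => x + q.2 • (q.1 - x))
        (R ×ˢ Set.Ioc (0:ℝ) 1) R := by
      rintro ⟨z, t⟩ ⟨hz, ht⟩
      exact hmemR t ⟨ht.1.le, ht.2⟩ z hz
    set F : Fin N → ((Fin N → ℝ) × ℝ) → ENNReal :=
      fun i q => (‖v i (x + q.2 • (q.1 - x))‖₊ : ENNReal) with hFdef
    have hFaemeas : ∀ i, AEMeasurable (F i)
        ((volume.restrict R).prod (volume.restrict (Set.Ioc (0:ℝ) 1))) := by
      intro i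
      rw [Measure.prod_restrict]
      refine ContinuousOn.aemeasurable ?_ (hRmeas.prod measurableSet_Ioc)
      have hc : ContinuousOn (fun q : (Fin N → ℝ) × ℝ => v i (x + q.2 • (q.1 - x)))
          (R ×ˢ Set.Ioc (0:ℝ) 1) :=
        (hvcont i).comp hφcont.continuousOn (fun q hq => hsub (hmapsTo hq))
      exact ENNReal.continuous_coe.comp_continuousOn hc.nnnorm
    have hHi : ∀ i, AEMeasurable (fun z => ∫⁻ t in Set.Ioc (0:ℝ) 1, F i (z, t) ∂volume)
        (volume.restrict R) := by
      intro i
      obtain ⟨G, hGmeas, hGae⟩ := hFaemeas i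
      have hae2 : (fun z => ∫⁻ t in Set.Ioc (0:ℝ) 1, F i (z, t) ∂volume)
          =ᵐ[volume.restrict R]
          (fun z => ∫⁻ t, G (z, t) ∂(volume.restrict (Set.Ioc (0:ℝ) 1))) := by
        filter_upwards [Measure.ae_ae_of_ae_prod hGae] with z hz
        exact lintegral_congr_ae hz
      exact ((hGmeas.lintegral_prod_right' :
        Measurable fun z => ∫⁻ t, G (z, t) ∂(volume.restrict (Set.Ioc (0:ℝ) 1))).aemeasurable).congr
        hae2.symm
    have hswap : ∀ i, (∫⁻ z in R, ∫⁻ t in Set.Ioc (0:ℝ) 1, F i (z, t) ∂volume ∂volume)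
        = ∫⁻ t in Set.Ioc (0:ℝ) 1, ∫⁻ z in R, F i (z, t) ∂volume ∂volume :=
      fun i => lintegral_lintegral_swap (hFaemeas i)
    -- Hölder + scaling estimate for fixed t
    have hholder : ∀ i : Fin N, ∀ t ∈ Set.Ioc (0:ℝ) 1,
        (∫⁻ z in R, F i (z, t) ∂volume)
          ≤ ENNReal.ofReal (t ^ (-(N:ℝ) / p i)) * (B i * (volume R) ^ (1 - 1 / p i)) := by
      intro i t ht
      have ht0 : (0:ℝ) < t := ht.1
      have hconj : (p i).HolderConjugate ((p i).conjExponent) :=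
        Real.HolderConjugate.conjExponent (h1p i)
      have hmemt : ∀ z ∈ R, x + t • (z - x) ∈ R :=
        fun z hz => hmemR t ⟨ht0.le, ht.2⟩ z hz
      have hft : AEMeasurable (fun z => F i (z, t)) (volume.restrict R) := by
        refine ContinuousOn.aemeasurable ?_ hRmeas
        have hc : ContinuousOn (fun z => v i (x + t • (z - x))) R :=
          (hvcont i).comp
            (by fun_prop : Continuous fun z : Fin N → ℝ => x + t • (z - x)).continuousOn
            (fun z hz => hsub (hmemt z hz))
        exact ENNReal.continuous_coe.comp_continuousOn hc.nnnorm
      have h2 := ENNReal.lintegral_mul_le_Lp_mul_Lq (volume.restrict R) hconj hft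
        (aemeasurable_const (b := (1:ENNReal)))
      simp only [Pi.mul_apply, Pi.one_apply, mul_one, ENNReal.one_rpow, lintegral_one,
        Measure.restrict_apply_univ] at h2
      -- scaling step
      have hscale : (∫⁻ z in R, F i (z, t) ^ (p i) ∂volume)
          ≤ ENNReal.ofReal (t ^ (-(N:ℝ))) * ∫⁻ w in R, (‖v i w‖₊ : ENNReal) ^ (p i) ∂volume := by
        set W : (Fin N → ℝ) → ENNReal :=
          Set.indicator R (fun w => (‖v i w‖₊ : ENNReal) ^ (p i)) with hWdef
        have hWae : AEMeasurable W volume := by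
          rw [aemeasurable_indicator_iff hRmeas]
          refine ContinuousOn.aemeasurable ?_ hRmeas
          exact ENNReal.continuous_rpow_const.comp_continuousOn
            (ENNReal.continuous_coe.comp_continuousOn ((hvcont i).mono hsub).nnnorm)
        have step1 : (∫⁻ z in R, F i (z, t) ^ (p i) ∂volume)
            = ∫⁻ z in R, W (x + t • (z - x)) ∂volume := by
          refine setLIntegral_congr_fun hRmeas (fun z hz => ?_)
          rw [hWdef, Set.indicator_of_mem (hmemt z hz)]
        have hmapeq : Measure.map (fun z : Fin N → ℝ => x + t • (z - x)) volume
            = ENNReal.ofReal (t ^ (-(N:ℝ))) • volume := by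
          have hfun : (fun z : Fin N → ℝ => x + t • (z - x))
              = (fun w => w + (x - t • x)) ∘ (fun z : Fin N → ℝ => t • z) := by
            funext w
            show x + t • (w - x) = t • w + (x - t • x)
            module
          rw [hfun, ← Measure.map_map (measurable_add_const _) (measurable_const_smul _)]
          rw [Measure.map_addHaar_smul volume (ne_of_gt ht0), Measure.map_smul,
            map_add_right_eq_self]
          congr 1
          rw [abs_of_nonneg (by positivity : (0:ℝ) ≤ (t ^ (Module.finrank ℝ (Fin N → ℝ)))⁻¹)]
          rw [Real.rpow_neg ht0.le, Real.rpow_natCast]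
          congr 2
          simp [Module.finrank_pi]
        have step3 : (∫⁻ z, W (x + t • (z - x)) ∂volume)
            = ENNReal.ofReal (t ^ (-(N:ℝ))) * ∫⁻ w in R, (‖v i w‖₊ : ENNReal) ^ (p i) ∂volume := by
          have hWmap : AEMeasurable W
              (Measure.map (fun z : Fin N → ℝ => x + t • (z - x)) volume) := by
            rw [hmapeq]; exact hWae.smul_measure _
          rw [← lintegral_map' hWmap (hφcont.comp (Continuous.prodMk_left t)).aemeasurable]
          · rw [hmapeq, lintegral_smul_measure, hWdef, lintegral_indicator hRmeas, smul_eq_mul]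
        calc (∫⁻ z in R, F i (z, t) ^ (p i) ∂volume)
            = ∫⁻ z in R, W (x + t • (z - x)) ∂volume := step1
          _ ≤ ∫⁻ z, W (x + t • (z - x)) ∂volume := setLIntegral_le_lintegral _ _
          _ = _ := step3
      -- the L^p norm bound
      have h4 : (∫⁻ w in R, (‖v i w‖₊ : ENNReal) ^ (p i) ∂volume) ≤ B i ^ (p i) := by
        refine le_trans (lintegral_mono_set hsub) ?_
        have hBeq : B i ^ (p i)
            = ∫⁻ w in S, (‖v i w‖₊ : ENNReal) ^ (p i) ∂volume := by
          simp only [hBdef]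
          rw [eLpNorm_eq_lintegral_rpow_enorm_toReal
            (by simp [ENNReal.ofReal_eq_zero, not_le]; exact hppos i) ENNReal.ofReal_ne_top]
          rw [ENNReal.toReal_ofReal (hppos i).le]
          rw [← ENNReal.rpow_mul, one_div, inv_mul_cancel₀ (ne_of_gt (hppos i)),
            ENNReal.rpow_one]
          simp only [enorm_eq_nnnorm]
        rw [hBeq]
      -- put Hölder pieces together
      have h5 : (∫⁻ z in R, F i (z, t) ^ (p i) ∂volume) ^ (1 / p i)
          ≤ ENNReal.ofReal (t ^ (-(N:ℝ) / p i)) * B i := by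
        have h6 : (∫⁻ z in R, F i (z, t) ^ (p i) ∂volume)
            ≤ ENNReal.ofReal (t ^ (-(N:ℝ))) * B i ^ (p i) :=
          hscale.trans (mul_le_mul_right h4 _)
        refine le_trans (ENNReal.rpow_le_rpow h6 (div_nonneg zero_le_one (hppos i).le)) ?_
        rw [ENNReal.mul_rpow_of_nonneg _ _ (div_nonneg zero_le_one (hppos i).le)]
        rw [ENNReal.ofReal_rpow_of_pos (Real.rpow_pos_of_pos ht0 _)]
        rw [← Real.rpow_mul ht0.le]
        rw [← ENNReal.rpow_mul, mul_one_div_cancel (ne_of_gt (hppos i)), ENNReal.rpow_one]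
        apply le_of_eq
        congr 2
        ring
      have h7 : (volume R) ^ (1 / (p i).conjExponent) = (volume R) ^ (1 - 1 / p i) := by
        congr 1
        rw [one_div, ← hconj.one_sub_inv, one_div]
      calc (∫⁻ z in R, F i (z, t) ∂volume)
          ≤ (∫⁻ z in R, F i (z, t) ^ (p i) ∂volume) ^ (1 / p i)
              * (volume R) ^ (1 / (p i).conjExponent) := h2
        _ ≤ ENNReal.ofReal (t ^ (-(N:ℝ) / p i)) * B i * (volume R) ^ (1 - 1 / p i) := by
            rw [h7]; exact mul_le_mul_left h5 _
        _ = ENNReal.ofReal (t ^ (-(N:ℝ) / p i)) * (B i * (volume R) ^ (1 - 1 / p i)) := by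
            rw [mul_assoc]
    -- value of the t-integral
    have hval : ∀ i : Fin N, (∫⁻ t in Set.Ioc (0:ℝ) 1, ENNReal.ofReal (t ^ (-(N:ℝ) / p i)) ∂volume)
        = ENNReal.ofReal ((1 - N / p i)⁻¹) := by
      intro i
      have hexp : (-1:ℝ) < -(N:ℝ) / p i := by
        rw [neg_div, neg_lt_neg_iff]
        rw [div_lt_one (hppos i)]
        exact hp i
      have hint : IntegrableOn (fun t : ℝ => t ^ (-(N:ℝ) / p i)) (Set.Ioc (0:ℝ) 1) volume := by
        have := intervalIntegral.intervalIntegrable_rpow' (a := 0) (b := 1) hexp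
        rwa [intervalIntegrable_iff_integrableOn_Ioc_of_le zero_le_one] at this
      rw [← ofReal_integral_eq_lintegral_ofReal hint]
      · congr 1
        have h8 : (∫ t in Set.Ioc (0:ℝ) 1, t ^ (-(N:ℝ) / p i) ∂volume)
            = ∫ t in (0:ℝ)..1, t ^ (-(N:ℝ) / p i) :=
          (intervalIntegral.integral_of_le zero_le_one).symm
        rw [h8, integral_rpow (Or.inl hexp)]
        have hlt : (0:ℝ) < -(N:ℝ) / p i + 1 := by linarith
        rw [Real.one_rpow, Real.zero_rpow (ne_of_gt hlt), sub_zero, one_div]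
        congr 1
        ring
      · filter_upwards [ae_restrict_mem measurableSet_Ioc] with t ht
        exact Real.rpow_nonneg ht.1.le _
    -- assemble
    calc (∫⁻ z in R, (‖u x - u z‖₊ : ENNReal) ∂volume)
        ≤ ∫⁻ z in R, (∑ i, ENNReal.ofReal (r i)
            * ∫⁻ t in Set.Ioc (0:ℝ) 1, F i (z, t) ∂volume) ∂volume := by
          refine lintegral_mono_ae ?_
          filter_upwards [ae_restrict_mem hRmeas] with z hz using hpt z hz
      _ = ∑ i, ∫⁻ z in R, (ENNReal.ofReal (r i)
            * ∫⁻ t in Set.Ioc (0:ℝ) 1, F i (z, t) ∂volume) ∂volume :=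
          lintegral_finset_sum' _ (fun i _ => ((hHi i).const_mul _))
      _ = ∑ i, ENNReal.ofReal (r i)
            * ∫⁻ z in R, (∫⁻ t in Set.Ioc (0:ℝ) 1, F i (z, t) ∂volume) ∂volume :=
          Finset.sum_congr rfl fun i _ => lintegral_const_mul' _ _ ENNReal.ofReal_ne_top
      _ = ∑ i, ENNReal.ofReal (r i)
            * ∫⁻ t in Set.Ioc (0:ℝ) 1, (∫⁻ z in R, F i (z, t) ∂volume) ∂volume := by
          exact Finset.sum_congr rfl fun i _ => by rw [hswap i]
      _ ≤ ∑ i, ENNReal.ofReal (r i) * (ENNReal.ofReal ((1 - N / p i)⁻¹)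
            * (B i * (volume R) ^ (1 - 1 / p i))) := by
          refine Finset.sum_le_sum fun i _ => mul_le_mul_right ?_ _
          have hle : (∫⁻ t in Set.Ioc (0:ℝ) 1, (∫⁻ z in R, F i (z, t) ∂volume) ∂volume)
              ≤ ∫⁻ t in Set.Ioc (0:ℝ) 1, ENNReal.ofReal (t ^ (-(N:ℝ) / p i))
                  * (B i * (volume R) ^ (1 - 1 / p i)) ∂volume := by
            refine lintegral_mono_ae ?_
            filter_upwards [ae_restrict_mem measurableSet_Ioc] with t ht using hholder i t ht
          refine hle.trans ?_
          rw [lintegral_mul_const' _ _ (by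
            exact ENNReal.mul_ne_top (hBfin i)
              (ENNReal.rpow_ne_top_of_nonneg (by
                have := (h1p i); have := hppos i
                have h9 : 1 / p i ≤ 1 := by
                  rw [div_le_one (hppos i)]; linarith
                linarith) hRfin.ne))]
          rw [hval i]
  -- from ENNReal estimate to the real inequality
  have huR : IntegrableOn u R volume :=
    (hu.continuousOn.mono hsub).integrableOn_compact hRcomp
  have hsplit : (∫ z in R, (u x - u z) ∂volume)
      = u x * (∏ i, r i) - ∫ z in R, u z ∂volume := by
    rw [integral_sub (integrableOn_const (C := u x) hRfin.ne) huR]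
    rw [setIntegral_const, measureReal_def, hVtoReal, smul_eq_mul, mul_comm]
  have hfinal : |u x * (∏ i, r i) - ∫ z in R, u z ∂volume|
      ≤ ((∑ i, ENNReal.ofReal (r i) * (ENNReal.ofReal ((1 - N / p i)⁻¹)
          * (B i * (volume R) ^ (1 - 1 / p i))))).toReal := by
    rw [← hsplit, ← Real.norm_eq_abs]
    have h10 : ‖∫ z in R, (u x - u z) ∂volume‖
        = ((‖∫ z in R, (u x - u z) ∂volume‖₊ : ENNReal)).toReal := by
      simp
    rw [h10]
    refine ENNReal.toReal_mono ?_ ?_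
    · refine (ne_of_lt ?_)
      refine lt_of_le_of_lt (le_refl _) ?_
      refine ENNReal.sum_lt_top.2 fun i _ => ?_
      refine ENNReal.mul_lt_top ENNReal.ofReal_lt_top ?_
      refine ENNReal.mul_lt_top ENNReal.ofReal_lt_top ?_
      refine ENNReal.mul_lt_top (lt_of_le_of_ne le_top (hBfin i)) ?_
      refine ENNReal.rpow_lt_top_of_nonneg ?_ hRfin.ne
      have h9 : 1 / p i ≤ 1 := by
        rw [div_le_one (hppos i)]
        linarith [h1p i]
      linarith
    · exact le_trans (enorm_integral_le_lintegral_enorm _) hmain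
  refine hfinal.trans (le_of_eq ?_)
  rw [ENNReal.toReal_sum (fun i _ => ?fin)]
  case fin =>
    refine ENNReal.mul_ne_top ENNReal.ofReal_ne_top ?_
    refine ENNReal.mul_ne_top ENNReal.ofReal_ne_top ?_
    refine ENNReal.mul_ne_top (hBfin i) ?_
    refine ENNReal.rpow_ne_top_of_nonneg ?_ hRfin.ne
    have h9 : 1 / p i ≤ 1 := by
      rw [div_le_one (hppos i)]
      linarith [h1p i]
    linarith
  refine Finset.sum_congr rfl fun i _ => ?_
  rw [ENNReal.toReal_mul, ENNReal.toReal_mul, ENNReal.toReal_mul]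
  rw [ENNReal.toReal_ofReal (hr i).le]
  rw [ENNReal.toReal_ofReal (by
    have hlt1 : (N:ℝ) / p i < 1 := by rw [div_lt_one (hppos i)]; exact hp i
    exact inv_nonneg.2 (by linarith))]
  rw [← ENNReal.toReal_rpow, hVtoReal]


lemma two_point_bound (hN : 0 < N) (a b : Fin N → ℝ) (hab : ∀ i, a i < b i)
    (p : Fin N → ℝ) (hp : ∀ i, (N:ℝ) < p i)
    (u : (Fin N → ℝ) → ℝ) (hu : ContDiffOn ℝ 1 u (Set.Icc a b))
    (c r : Fin N → ℝ) (hr : ∀ i, 0 < r i)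
    (hsub : Set.Icc c (fun i => c i + r i) ⊆ Set.Icc a b)
    (x y : Fin N → ℝ) (hx : x ∈ Set.Icc c (fun i => c i + r i))
    (hy : y ∈ Set.Icc c (fun i => c i + r i)) :
    |u x - u y|
      ≤ 2 * ∑ i, r i * ((1 - N / p i)⁻¹
          * ((eLpNorm (fun z => fderivWithin ℝ u (Set.Icc a b) z (Pi.single i 1))
              (ENNReal.ofReal (p i)) (volume.restrict (Set.Icc a b))).toReal
          * (∏ j, r j) ^ (-(1 / p i)))) := by
  have hVpos : (0:ℝ) < ∏ j, r j := Finset.prod_pos fun i _ => hr i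
  set A : Fin N → ℝ := fun i =>
    (eLpNorm (fun z => fderivWithin ℝ u (Set.Icc a b) z (Pi.single i 1))
      (ENNReal.ofReal (p i)) (volume.restrict (Set.Icc a b))).toReal with hA
  have hbx := rect_bound hN a b hab p hp u hu c r hr hsub x hx
  have hby := rect_bound hN a b hab p hp u hu c r hr hsub y hy
  have habs : |u x - u y| * (∏ j, r j)
      ≤ (2 * ∑ i, r i * ((1 - N / p i)⁻¹ * (A i * (∏ j, r j) ^ (-(1 / p i)))))
        * (∏ j, r j) := by
    have heq : |u x - u y| * (∏ j, r j)
        = |(u x * (∏ i, r i) - ∫ z in Set.Icc c (fun i => c i + r i), u z)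
            - (u y * (∏ i, r i) - ∫ z in Set.Icc c (fun i => c i + r i), u z)| := by
      have h0 : |u x - u y| * (∏ j, r j) = |(u x - u y) * (∏ j, r j)| := by
        rw [abs_mul, abs_of_pos hVpos]
      rw [h0]
      congr 1
      ring
    have h2 : (2 * ∑ i, r i * ((1 - N / p i)⁻¹ * (A i * (∏ j, r j) ^ (-(1 / p i)))))
        * (∏ j, r j)
        = 2 * ∑ i, r i * ((1 - N / p i)⁻¹ * (A i * (∏ j, r j) ^ (1 - 1 / p i))) := by
      rw [mul_assoc, Finset.sum_mul]
      congr 1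
      refine Finset.sum_congr rfl fun i _ => ?_
      have hrp : (∏ j, r j) ^ (-(1 / p i)) * (∏ j, r j) = (∏ j, r j) ^ (1 - 1 / p i) := by
        nth_rewrite 2 [← Real.rpow_one (∏ j, r j)]
        rw [← Real.rpow_add hVpos]
        congr 1
        ring
      rw [← hrp]
      ring
    rw [heq, h2]
    calc |(u x * (∏ i, r i) - ∫ z in Set.Icc c (fun i => c i + r i), u z)
            - (u y * (∏ i, r i) - ∫ z in Set.Icc c (fun i => c i + r i), u z)|
        ≤ |u x * (∏ i, r i) - ∫ z in Set.Icc c (fun i => c i + r i), u z|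
          + |u y * (∏ i, r i) - ∫ z in Set.Icc c (fun i => c i + r i), u z| :=
          abs_sub _ _
      _ ≤ _ := by
          rw [two_mul]
          exact add_le_add hbx hby
  exact le_of_mul_le_mul_right habs hVpos

end AnisoMorreyAux

/-- Constant-exponent case of the main embedding theorem (Theorem 1.1):
the anisotropic Sobolev norm controls the anisotropic Hölder seminorm on a
rectangular domain `Ω = ∏ (a i, b i)`. -/
theorem anisotropic_sobolev_holder_embedding
    (N : ℕ) (hN : 2 ≤ N) (a b : Fin N → ℝ) (hab : ∀ i, a i < b i)
    (p : Fin N → ℝ) (hp : ∀ i, (N : ℝ) < p i)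
    (pM : ℝ) (hpM : IsGreatest (Set.range p) pM)
    (β : Fin N → ℝ)
    (hβ : ∀ i, β i = (1 - ∑ j, 1 / p j) / (1 - ∑ j, 1 / p j + N / p i)) :
    ∃ C > (0 : ℝ), ∀ u : (Fin N → ℝ) → ℝ,
      ContDiffOn ℝ 1 u (Set.Icc a b) →
      ∀ x ∈ Set.Icc a b, ∀ y ∈ Set.Icc a b,
        |u x - u y| ≤
          C * ((eLpNorm u (ENNReal.ofReal pM)
                (volume.restrict (Set.pi Set.univ fun i => Set.Ioo (a i) (b i)))).toReal
              + ∑ i, (eLpNorm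
                  (fun z => fderivWithin ℝ u (Set.Icc a b) z (Pi.single i 1))
                  (ENNReal.ofReal (p i))
                  (volume.restrict (Set.pi Set.univ fun i => Set.Ioo (a i) (b i)))).toReal)
            * ∑ i, |x i - y i| ^ β i := by
  have hNpos : 0 < N := lt_of_lt_of_le two_pos hN
  have hNR : (0:ℝ) < N := by exact_mod_cast hNpos
  have hppos : ∀ i, 0 < p i := fun i => lt_trans hNR (hp i)
  haveI : Nonempty (Fin N) := Fin.pos_iff_nonempty.mp hNpos
  have hne : (Finset.univ : Finset (Fin N)).Nonempty := Finset.univ_nonempty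
  set s : ℝ := 1 - ∑ j, 1 / p j with hs_def
  have hsum_lt : ∑ j, 1 / p j < 1 := by
    have h1 : ∀ j : Fin N, 1 / p j < 1 / (N:ℝ) := fun j =>
      one_div_lt_one_div_of_lt hNR (hp j)
    calc ∑ j, 1 / p j < ∑ _j : Fin N, 1 / (N:ℝ) :=
          Finset.sum_lt_sum_of_nonempty hne (fun j _ => h1 j)
      _ = 1 := by
          rw [Finset.sum_const, Finset.card_univ, Fintype.card_fin, nsmul_eq_mul]
          field_simp
  have hs : 0 < s := by rw [hs_def]; linarith
  set σ : Fin N → ℝ := fun i => s / N + 1 / p i with hσ_def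
  have hσpos : ∀ i, 0 < σ i := fun i =>
    add_pos (div_pos hs hNR) (div_pos one_pos (hppos i))
  have hσsum : ∑ i, σ i = 1 := by
    have h2 : ∑ j : Fin N, 1 / p j = 1 - s := by rw [hs_def]; ring
    have h3 : ∑ _j : Fin N, s / (N:ℝ) = s := by
      rw [Finset.sum_const, Finset.card_univ, Fintype.card_fin, nsmul_eq_mul]
      field_simp
    calc ∑ i, σ i = ∑ i : Fin N, (s / N + 1 / p i) := rfl
      _ = (∑ _i : Fin N, s / (N:ℝ)) + ∑ i : Fin N, 1 / p i := Finset.sum_add_distrib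
      _ = s + (1 - s) := by rw [h2, h3]
      _ = 1 := by ring
  have hβ' : ∀ i, β i = (s / N) / σ i := by
    intro i
    rw [hβ i]
    have hd1 : 0 < s + (N:ℝ) / p i := add_pos hs (div_pos hNR (hppos i))
    have hd2 : 0 < σ i := hσpos i
    have hσi : σ i = s / N + 1 / p i := rfl
    rw [hσi]
    field_simp
  have hβnn : ∀ i, 0 ≤ β i := fun i => by
    rw [hβ' i]
    exact div_nonneg (div_nonneg hs.le hNR.le) (hσpos i).le
  have hrestr : volume.restrict (Set.pi Set.univ fun i => Set.Ioo (a i) (b i))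
      = volume.restrict (Set.Icc a b) :=
    Measure.restrict_congr_set Measure.univ_pi_Ioo_ae_eq_Icc
  set c0 : Fin N → ℝ := fun i => (1 - (N:ℝ) / p i)⁻¹ with hc0
  have hc0pos : ∀ i, 0 < c0 i := by
    intro i
    have h4 : (N:ℝ) / p i < 1 := (div_lt_one (hppos i)).2 (hp i)
    exact inv_pos.2 (by linarith)
  set D : ℝ := ∑ i, c0 i with hD
  have hDpos : 0 < D := Finset.sum_pos (fun i _ => hc0pos i) hne
  set t₀ : ℝ := Finset.univ.inf' hne (fun i => (b i - a i) ^ (1 / σ i)) with ht₀def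
  have ht₀pos : 0 < t₀ :=
    (Finset.lt_inf'_iff hne).mpr fun i _ => Real.rpow_pos_of_pos (by linarith [hab i]) _
  set V0 : ℝ := ∏ i, (b i - a i) with hV0
  have hV0pos : 0 < V0 := Finset.prod_pos fun i _ => by linarith [hab i]
  set E : ℝ := 2 * ∑ i, c0 i * ((b i - a i) * V0 ^ (-(1 / p i))) with hE
  have hEnn : 0 ≤ E := by
    refine mul_nonneg (by norm_num) (Finset.sum_nonneg fun i _ => ?_)
    exact mul_nonneg (hc0pos i).le
      (mul_nonneg (by linarith [hab i]) (Real.rpow_nonneg hV0pos.le _))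
  set K1 : ℝ := 2 * D with hK1
  have hK1pos : 0 < K1 := mul_pos two_pos hDpos
  set K2 : ℝ := E / t₀ ^ (s / N) with hK2
  have hK2nn : 0 ≤ K2 := div_nonneg hEnn (Real.rpow_nonneg ht₀pos.le _)
  refine ⟨max K1 K2, lt_of_lt_of_le hK1pos (le_max_left _ _), ?_⟩
  intro u hu x hx y hy
  rw [hrestr]
  set A : Fin N → ℝ := fun i =>
    (eLpNorm (fun z => fderivWithin ℝ u (Set.Icc a b) z (Pi.single i 1))
      (ENNReal.ofReal (p i)) (volume.restrict (Set.Icc a b))).toReal with hA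
  set U : ℝ := (eLpNorm u (ENNReal.ofReal pM) (volume.restrict (Set.Icc a b))).toReal with hU
  set SA : ℝ := ∑ i, A i with hSA
  have hSAnn : 0 ≤ SA :=
    Finset.sum_nonneg fun i _ => ENNReal.toReal_nonneg
  have hAnn : ∀ i, 0 ≤ A i := fun i => ENNReal.toReal_nonneg
  have hUnn : 0 ≤ U := ENNReal.toReal_nonneg
  have hHnn : 0 ≤ ∑ i, |x i - y i| ^ β i :=
    Finset.sum_nonneg fun i _ => Real.rpow_nonneg (abs_nonneg _) _
  by_cases hxy : x = y
  · subst hxy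
    have hzz : u x - u x = 0 := sub_self _
    rw [hzz, abs_zero]
    refine mul_nonneg (mul_nonneg ?_ (by linarith)) hHnn
    exact le_trans hK1pos.le (le_max_left _ _)
  have hASA : ∀ i, A i ≤ SA := fun i =>
    Finset.single_le_sum (fun j _ => hAnn j) (Finset.mem_univ i)
  -- the exponent balancing parameter
  set t : ℝ := Finset.univ.sup' hne (fun i => |x i - y i| ^ (1 / σ i)) with htdef
  have hxyj : ∃ j, x j ≠ y j := by
    by_contra h
    push_neg at h
    exact hxy (funext h)
  obtain ⟨j, hj⟩ := hxyj
  have htpos : 0 < t := by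
    rw [htdef]
    exact lt_of_lt_of_le (Real.rpow_pos_of_pos (abs_pos.2 (sub_ne_zero.2 hj)) (1 / σ j))
      (Finset.le_sup' (fun i => |x i - y i| ^ (1 / σ i)) (Finset.mem_univ j))
  obtain ⟨i0, _, hi0⟩ := Finset.exists_mem_eq_sup' hne (fun i => |x i - y i| ^ (1 / σ i))
  have hts : t ^ (s / N) ≤ ∑ i, |x i - y i| ^ β i := by
    have h1 : t ^ (s / N) = |x i0 - y i0| ^ β i0 := by
      rw [htdef, hi0, ← Real.rpow_mul (abs_nonneg _), hβ' i0]
      congr 1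
      ring
    rw [h1]
    exact Finset.single_le_sum (f := fun i => |x i - y i| ^ β i)
      (fun i _ => Real.rpow_nonneg (abs_nonneg _) _) (Finset.mem_univ i0)
  have hd_le : ∀ i, |x i - y i| ≤ t ^ σ i := by
    intro i
    have h2 : |x i - y i| ^ (1 / σ i) ≤ t := by
      rw [htdef]
      exact Finset.le_sup' (fun i => |x i - y i| ^ (1 / σ i)) (Finset.mem_univ i)
    calc |x i - y i| = (|x i - y i| ^ (1 / σ i)) ^ σ i := by
          rw [← Real.rpow_mul (abs_nonneg _), one_div,
            inv_mul_cancel₀ (ne_of_gt (hσpos i)), Real.rpow_one]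
      _ ≤ t ^ σ i := Real.rpow_le_rpow (Real.rpow_nonneg (abs_nonneg _) _) h2 (hσpos i).le
  have hkey : |u x - u y| ≤ (max K1 K2) * (SA * ∑ i, |x i - y i| ^ β i) := by
    by_cases hcase : t ≤ t₀
    · -- small rectangle case
      set r : Fin N → ℝ := fun i => t ^ σ i with hrdef
      have hrpos : ∀ i, 0 < r i := fun i => Real.rpow_pos_of_pos htpos _
      have hrle : ∀ i, r i ≤ b i - a i := by
        intro i
        have h3 : t ≤ (b i - a i) ^ (1 / σ i) := by
          refine le_trans hcase ?_
          rw [ht₀def]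
          exact Finset.inf'_le (fun i => (b i - a i) ^ (1 / σ i)) (Finset.mem_univ i)
        calc r i = t ^ σ i := rfl
          _ ≤ ((b i - a i) ^ (1 / σ i)) ^ σ i :=
              Real.rpow_le_rpow htpos.le h3 (hσpos i).le
          _ = b i - a i := by
              rw [← Real.rpow_mul (by linarith [hab i] : (0:ℝ) ≤ b i - a i), one_div,
                inv_mul_cancel₀ (ne_of_gt (hσpos i)), Real.rpow_one]
      set c : Fin N → ℝ := fun i => min (min (x i) (y i)) (b i - r i) with hcdef
      have hmem : ∀ i, a i ≤ c i ∧ c i + r i ≤ b i ∧ c i ≤ x i ∧ x i ≤ c i + r i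
          ∧ c i ≤ y i ∧ y i ≤ c i + r i := by
        intro i
        have hx1 : a i ≤ x i := hx.1 i
        have hx2 : x i ≤ b i := hx.2 i
        have hy1 : a i ≤ y i := hy.1 i
        have hy2 : y i ≤ b i := hy.2 i
        have hdle : |x i - y i| ≤ r i := hd_le i
        have habs2 := abs_sub_le_iff.1 hdle
        have hrp := hrpos i
        have hrl := hrle i
        have hci : c i = min (min (x i) (y i)) (b i - r i) := rfl
        have hcb : c i ≤ b i - r i := by rw [hci]; exact min_le_right _ _
        have hcxy : c i ≤ min (x i) (y i) := by rw [hci]; exact min_le_left _ _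
        have hxmin : x i ≤ min (x i) (y i) + r i := by
          rcases le_total (x i) (y i) with h | h
          · rw [min_eq_left h]; linarith
          · rw [min_eq_right h]; linarith [habs2.1]
        have hymin : y i ≤ min (x i) (y i) + r i := by
          rcases le_total (x i) (y i) with h | h
          · rw [min_eq_left h]; linarith [habs2.2]
          · rw [min_eq_right h]; linarith
        refine ⟨?_, by linarith, le_trans hcxy (min_le_left _ _),
          ?_, le_trans hcxy (min_le_right _ _), ?_⟩
        · rw [hci]
          exact le_min (le_min hx1 hy1) (by linarith)
        · rcases le_total (min (x i) (y i)) (b i - r i) with h | h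
          · rw [hci, min_eq_left h]; linarith
          · rw [hci, min_eq_right h]; linarith
        · rcases le_total (min (x i) (y i)) (b i - r i) with h | h
          · rw [hci, min_eq_left h]; linarith
          · rw [hci, min_eq_right h]; linarith
      have hsubR : Set.Icc c (fun i => c i + r i) ⊆ Set.Icc a b :=
        Set.Icc_subset_Icc (fun i => (hmem i).1) (fun i => (hmem i).2.1)
      have hxR : x ∈ Set.Icc c (fun i => c i + r i) :=
        ⟨fun i => (hmem i).2.2.1, fun i => (hmem i).2.2.2.1⟩
      have hyR : y ∈ Set.Icc c (fun i => c i + r i) :=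
        ⟨fun i => (hmem i).2.2.2.2.1, fun i => (hmem i).2.2.2.2.2⟩
      have hbd := two_point_bound hNpos a b hab p hp u hu c r hrpos hsubR x y hxR hyR
      have hV : ∏ j, r j = t := by
        calc ∏ j, r j = ∏ j, t ^ σ j := rfl
          _ = t ^ (∑ j, σ j) := (Real.rpow_sum_of_pos htpos _ _).symm
          _ = t := by rw [hσsum, Real.rpow_one]
      have h6 : 2 * ∑ i, r i * ((1 - (N:ℝ) / p i)⁻¹
          * (A i * (∏ j, r j) ^ (-(1 / p i))))
          ≤ (max K1 K2) * (SA * ∑ i, |x i - y i| ^ β i) := by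
        have hterm : ∀ i, r i * ((1 - (N:ℝ) / p i)⁻¹
            * (A i * (∏ j, r j) ^ (-(1 / p i))))
            = c0 i * A i * t ^ (s / N) := by
          intro i
          rw [hV]
          have h7 : r i = t ^ σ i := rfl
          have h8 : t ^ σ i * t ^ (-(1 / p i)) = t ^ (s / N) := by
            rw [← Real.rpow_add htpos]
            congr 1
            have h9 : σ i = s / N + 1 / p i := rfl
            rw [h9]; ring
          calc r i * ((1 - (N:ℝ) / p i)⁻¹ * (A i * t ^ (-(1 / p i))))
              = (1 - (N:ℝ) / p i)⁻¹ * A i * (t ^ σ i * t ^ (-(1 / p i))) := by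
                rw [h7]; ring
            _ = c0 i * A i * t ^ (s / N) := by rw [h8]
        rw [Finset.sum_congr rfl fun i _ => hterm i, ← Finset.sum_mul]
        have h10 : ∑ i, c0 i * A i ≤ D * SA := by
          calc ∑ i, c0 i * A i ≤ ∑ i, c0 i * SA :=
                Finset.sum_le_sum fun i _ =>
                  mul_le_mul_of_nonneg_left (hASA i) (hc0pos i).le
            _ = D * SA := by rw [hD, Finset.sum_mul]
        calc 2 * ((∑ i, c0 i * A i) * t ^ (s / N))
            ≤ 2 * ((D * SA) * ∑ i, |x i - y i| ^ β i) := by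
              refine mul_le_mul_of_nonneg_left ?_ (by norm_num)
              refine mul_le_mul h10 hts (Real.rpow_nonneg htpos.le _)
                (mul_nonneg hDpos.le hSAnn)
          _ = K1 * (SA * ∑ i, |x i - y i| ^ β i) := by rw [hK1]; ring
          _ ≤ (max K1 K2) * (SA * ∑ i, |x i - y i| ^ β i) := by
              refine mul_le_mul_of_nonneg_right (le_max_left _ _) ?_
              exact mul_nonneg hSAnn hHnn
      exact le_trans hbd h6
    · -- whole box case
      push_neg at hcase
      set r : Fin N → ℝ := fun i => b i - a i with hrdef
      have hrpos : ∀ i, 0 < r i := fun i => sub_pos.2 (hab i)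
      have hbeq : (fun i => a i + r i) = b := funext fun i => by
        show a i + (b i - a i) = b i; ring
      have hsubR : Set.Icc a (fun i => a i + r i) ⊆ Set.Icc a b := by
        rw [hbeq]
      have hxR : x ∈ Set.Icc a (fun i => a i + r i) := by rw [hbeq]; exact hx
      have hyR : y ∈ Set.Icc a (fun i => a i + r i) := by rw [hbeq]; exact hy
      have hbd := two_point_bound hNpos a b hab p hp u hu a r hrpos hsubR x y hxR hyR
      have hV : ∏ j, r j = V0 := rfl
      have h6 : 2 * ∑ i, r i * ((1 - (N:ℝ) / p i)⁻¹
          * (A i * (∏ j, r j) ^ (-(1 / p i))))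
          ≤ (max K1 K2) * (SA * ∑ i, |x i - y i| ^ β i) := by
        have hterm : ∀ i, r i * ((1 - (N:ℝ) / p i)⁻¹
            * (A i * (∏ j, r j) ^ (-(1 / p i))))
            ≤ (c0 i * ((b i - a i) * V0 ^ (-(1 / p i)))) * SA := by
          intro i
          rw [hV]
          have h7 : r i = b i - a i := rfl
          rw [h7]
          have hcoeff : 0 ≤ (1 - (N:ℝ) / p i)⁻¹ * ((b i - a i) * V0 ^ (-(1 / p i))) :=
            mul_nonneg (hc0pos i).le
              (mul_nonneg (by linarith [hab i]) (Real.rpow_nonneg hV0pos.le _))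
          calc (b i - a i) * ((1 - (N:ℝ) / p i)⁻¹ * (A i * V0 ^ (-(1 / p i))))
              = ((1 - (N:ℝ) / p i)⁻¹ * ((b i - a i) * V0 ^ (-(1 / p i)))) * A i := by ring
            _ ≤ ((1 - (N:ℝ) / p i)⁻¹ * ((b i - a i) * V0 ^ (-(1 / p i)))) * SA :=
                mul_le_mul_of_nonneg_left (hASA i) hcoeff
            _ = (c0 i * ((b i - a i) * V0 ^ (-(1 / p i)))) * SA := rfl
        have h11 : ∑ i, r i * ((1 - (N:ℝ) / p i)⁻¹ * (A i * (∏ j, r j) ^ (-(1 / p i))))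
            ≤ (∑ i, c0 i * ((b i - a i) * V0 ^ (-(1 / p i)))) * SA := by
          rw [Finset.sum_mul]
          exact Finset.sum_le_sum fun i _ => hterm i
        have hEt : E = K2 * t₀ ^ (s / N) := by
          rw [hK2, div_mul_cancel₀]
          exact ne_of_gt (Real.rpow_pos_of_pos ht₀pos _)
        have ht₀t : t₀ ^ (s / N) ≤ ∑ i, |x i - y i| ^ β i :=
          le_trans (Real.rpow_le_rpow ht₀pos.le hcase.le (div_nonneg hs.le hNR.le)) hts
        calc 2 * ∑ i, r i * ((1 - (N:ℝ) / p i)⁻¹ * (A i * (∏ j, r j) ^ (-(1 / p i))))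
            ≤ 2 * ((∑ i, c0 i * ((b i - a i) * V0 ^ (-(1 / p i)))) * SA) := by
              refine mul_le_mul_of_nonneg_left h11 (by norm_num)
          _ = E * SA := by rw [hE]; ring
          _ = K2 * (t₀ ^ (s / N) * SA) := by rw [hEt]; ring
          _ ≤ K2 * ((∑ i, |x i - y i| ^ β i) * SA) := by
              refine mul_le_mul_of_nonneg_left ?_ hK2nn
              exact mul_le_mul_of_nonneg_right ht₀t hSAnn
          _ = K2 * (SA * ∑ i, |x i - y i| ^ β i) := by ring
          _ ≤ (max K1 K2) * (SA * ∑ i, |x i - y i| ^ β i) := by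
              refine mul_le_mul_of_nonneg_right (le_max_right _ _) (mul_nonneg hSAnn hHnn)
      exact le_trans hbd h6
  calc |u x - u y| ≤ (max K1 K2) * (SA * ∑ i, |x i - y i| ^ β i) := hkey
    _ ≤ (max K1 K2) * ((U + SA) * ∑ i, |x i - y i| ^ β i) := by
        refine mul_le_mul_of_nonneg_left ?_ (le_trans hK1pos.le (le_max_left _ _))
        refine mul_le_mul_of_nonneg_right (by linarith) hHnn
    _ = (max K1 K2) * (U + SA) * ∑ i, |x i - y i| ^ β i := by ring
end

section
/- Let Ω = {(x, y) ∈ ℝ² : x² < y < 2x² and 0 < x < 1}. Then the function u(x, y) = √x belongs to L⁴(Ω) and the function v(x, y) = 1/(2√x) (the partial derivative ∂_x u) belongs to L⁴(Ω), i.e., ∫_Ω x² d(x,y) < ∞ and ∫_Ω x^{−2}/16 d(x,y) < ∞, where integration is with respect to two-dimensional Lebesgue measure. -/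
open MeasureTheory Set

noncomputable section CuspAux

def cuspΩ : Set (ℝ × ℝ) :=
  {q : ℝ × ℝ | q.1 ^ 2 < q.2 ∧ q.2 < 2 * q.1 ^ 2 ∧ 0 < q.1 ∧ q.1 < 1}

lemma cuspΩ_measurable : MeasurableSet cuspΩ := by
  have h1 : MeasurableSet {q : ℝ × ℝ | q.1 ^ 2 < q.2} :=
    measurableSet_lt (by measurability) measurable_snd
  have h2 : MeasurableSet {q : ℝ × ℝ | q.2 < 2 * q.1 ^ 2} :=
    measurableSet_lt measurable_snd (by measurability)
  have h3 : MeasurableSet {q : ℝ × ℝ | 0 < q.1} :=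
    measurableSet_lt measurable_const measurable_fst
  have h4 : MeasurableSet {q : ℝ × ℝ | q.1 < 1} :=
    measurableSet_lt measurable_fst measurable_const
  have : cuspΩ = {q : ℝ × ℝ | q.1 ^ 2 < q.2} ∩ ({q : ℝ × ℝ | q.2 < 2 * q.1 ^ 2} ∩
      ({q : ℝ × ℝ | 0 < q.1} ∩ {q : ℝ × ℝ | q.1 < 1})) := by
    ext q; simp [cuspΩ, Set.mem_setOf_eq, and_assoc]
  rw [this]
  exact h1.inter (h2.inter (h3.inter h4))

lemma cusp_slice (x : ℝ) :
    {y : ℝ | (x, y) ∈ cuspΩ} = if x ∈ Ioo (0:ℝ) 1 then Ioo (x ^ 2) (2 * x ^ 2) else ∅ := by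
  by_cases h : x ∈ Ioo (0:ℝ) 1
  · simp only [h, if_true]
    ext y
    simp only [cuspΩ, mem_setOf_eq, mem_Ioo]
    exact ⟨fun ⟨a, b, _, _⟩ => ⟨a, b⟩, fun ⟨a, b⟩ => ⟨a, b, h.1, h.2⟩⟩
  · simp only [h, if_false]
    ext y
    simp only [cuspΩ, mem_setOf_eq, mem_empty_iff_false, iff_false, not_and]
    intro _ _ h0 h1'
    exact h ⟨h0, h1'⟩

lemma cusp_lintegral (φ : ℝ → ENNReal) (hφ : Measurable φ) :
    ∫⁻ q in cuspΩ, φ q.1 ∂volume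
      = ∫⁻ x in Ioo (0:ℝ) 1, φ x * ENNReal.ofReal (x ^ 2) := by
  rw [← lintegral_indicator cuspΩ_measurable]
  rw [Measure.volume_eq_prod]
  rw [lintegral_prod]
  · have hinner : ∀ x : ℝ, ∫⁻ y, cuspΩ.indicator (fun q => φ q.1) (x, y) ∂volume
        = (Ioo (0:ℝ) 1).indicator (fun x => φ x * ENNReal.ofReal (x ^ 2)) x := by
      intro x
      have hfun : (fun y => cuspΩ.indicator (fun q => φ q.1) (x, y))
          = {y : ℝ | (x, y) ∈ cuspΩ}.indicator (fun _ => φ x) := by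
        ext y
        by_cases h : (x, y) ∈ cuspΩ <;> simp [Set.indicator, h]
      rw [hfun, cusp_slice]
      by_cases h : x ∈ Ioo (0:ℝ) 1
      · simp only [h, if_true, indicator_of_mem]
        rw [lintegral_indicator measurableSet_Ioo, setLIntegral_const,
          Real.volume_Ioo]
        congr 1
        ring_nf
      · simp only [h, if_false, indicator_of_notMem, not_false_iff]
        simp
    simp_rw [hinner]
    rw [lintegral_indicator measurableSet_Ioo]
  · apply ((hφ.comp measurable_fst).indicator cuspΩ_measurable).aemeasurable

lemma cusp_lintegral_sq :
    ∫⁻ q in cuspΩ, ENNReal.ofReal (q.1 ^ 2) ∂volume ≤ 1 := by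
  rw [cusp_lintegral (fun x => ENNReal.ofReal (x ^ 2)) (by measurability)]
  calc ∫⁻ x in Ioo (0:ℝ) 1, ENNReal.ofReal (x ^ 2) * ENNReal.ofReal (x ^ 2)
      ≤ ∫⁻ _ in Ioo (0:ℝ) 1, (1 : ENNReal) := by
        apply setLIntegral_mono measurable_const
        intro x hx
        have hx1 : x ^ 2 ≤ 1 := by nlinarith [hx.1, hx.2]
        exact mul_le_one' (ENNReal.ofReal_le_one.mpr hx1) (ENNReal.ofReal_le_one.mpr hx1)
    _ = volume (Ioo (0:ℝ) 1) := setLIntegral_one _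
    _ = 1 := by rw [Real.volume_Ioo]; norm_num

lemma cusp_lintegral_inv_sq :
    ∫⁻ q in cuspΩ, ENNReal.ofReal ((q.1)⁻¹ ^ 2 / 16) ∂volume ≤ 1 := by
  rw [cusp_lintegral (fun x => ENNReal.ofReal (x⁻¹ ^ 2 / 16)) (by measurability)]
  calc ∫⁻ x in Ioo (0:ℝ) 1, ENNReal.ofReal (x⁻¹ ^ 2 / 16) * ENNReal.ofReal (x ^ 2)
      ≤ ∫⁻ _ in Ioo (0:ℝ) 1, (1 : ENNReal) := by
        apply setLIntegral_mono measurable_const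
        intro x hx
        have hx0 : x ≠ 0 := ne_of_gt hx.1
        rw [← ENNReal.ofReal_mul (by positivity)]
        apply ENNReal.ofReal_le_one.mpr
        have : x⁻¹ ^ 2 / 16 * x ^ 2 = 1 / 16 := by field_simp
        rw [this]; norm_num
    _ = volume (Ioo (0:ℝ) 1) := setLIntegral_one _
    _ = 1 := by rw [Real.volume_Ioo]; norm_num

lemma cusp_integrableOn_sq : IntegrableOn (fun q : ℝ × ℝ => q.1 ^ 2) cuspΩ volume := by
  refine ⟨(measurable_fst.pow_const 2).aestronglyMeasurable, ?_⟩
  have h : ∀ q : ℝ × ℝ, ‖q.1 ^ 2‖ₑ = ENNReal.ofReal (q.1 ^ 2) := fun q => by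
    rw [← ofReal_norm, Real.norm_eq_abs, abs_of_nonneg (sq_nonneg _)]
  unfold HasFiniteIntegral
  simp_rw [h]
  exact lt_of_le_of_lt cusp_lintegral_sq ENNReal.one_lt_top

lemma cusp_integrableOn_inv_sq :
    IntegrableOn (fun q : ℝ × ℝ => (q.1)⁻¹ ^ 2 / 16) cuspΩ volume := by
  refine ⟨(((measurable_fst.inv).pow_const 2).div_const 16).aestronglyMeasurable, ?_⟩
  have h : ∀ q : ℝ × ℝ, ‖(q.1)⁻¹ ^ 2 / 16‖ₑ
      = ENNReal.ofReal ((q.1)⁻¹ ^ 2 / 16) := fun q => by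
    rw [← ofReal_norm, Real.norm_eq_abs, abs_of_nonneg (by positivity)]
  unfold HasFiniteIntegral
  simp_rw [h]
  exact lt_of_le_of_lt cusp_lintegral_inv_sq ENNReal.one_lt_top

lemma cusp_memLp_of_integrable {f : ℝ × ℝ → ℝ} (hf : AEStronglyMeasurable f (volume.restrict cuspΩ))
    (g : ℝ × ℝ → ℝ) (hg : IntegrableOn g cuspΩ volume)
    (heq : ∀ q ∈ cuspΩ, g q = ‖f q‖ ^ (4:ℝ)) :
    MemLp f 4 (volume.restrict cuspΩ) := by
  have h44 : ((4:ENNReal) / 4) = 1 := by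
    rw [ENNReal.div_self] <;> norm_num
  have ht : ((4:ENNReal)).toReal = (4:ℝ) := by norm_num
  refine (memLp_norm_rpow_iff (q := 4) hf (by norm_num) (by norm_num)).mp ?_
  rw [h44, memLp_one_iff_integrable]
  refine hg.congr ?_
  refine (ae_restrict_iff' cuspΩ_measurable).2 (Filter.Eventually.of_forall fun q hq => ?_)
  rw [ht]
  exact heq q hq

end CuspAux

/-- The integrability claim from Counterexample 1 (Section 4): on the cusp
domain `Ω = {(x,y) : x² < y < 2x², 0 < x < 1}`, both `u(x,y) = √x` and its
partial derivative `∂ₓu(x,y) = 1/(2√x)` belong to `L⁴(Ω)`; equivalently,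
`∫_Ω x² < ∞` and `∫_Ω x⁻²/16 < ∞`. -/
theorem cusp_domain_L4_membership :
    let Ω : Set (ℝ × ℝ) :=
      {q : ℝ × ℝ | q.1 ^ 2 < q.2 ∧ q.2 < 2 * q.1 ^ 2 ∧ 0 < q.1 ∧ q.1 < 1}
    MemLp (fun q : ℝ × ℝ => Real.sqrt q.1) 4 (volume.restrict Ω) ∧
    MemLp (fun q : ℝ × ℝ => 1 / (2 * Real.sqrt q.1)) 4 (volume.restrict Ω) ∧
    IntegrableOn (fun q : ℝ × ℝ => q.1 ^ 2) Ω volume ∧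
    IntegrableOn (fun q : ℝ × ℝ => (q.1)⁻¹ ^ 2 / 16) Ω volume := by
  intro Ω
  have hΩ : Ω = cuspΩ := rfl
  rw [hΩ]
  refine ⟨?_, ?_, cusp_integrableOn_sq, cusp_integrableOn_inv_sq⟩
  · apply cusp_memLp_of_integrable
      (by exact (Real.continuous_sqrt.measurable.comp measurable_fst).aestronglyMeasurable :
        AEStronglyMeasurable (fun q : ℝ × ℝ => Real.sqrt q.1) (volume.restrict cuspΩ))
      _ cusp_integrableOn_sq
    intro q hq
    have hx : 0 < q.1 := hq.2.2.1
    have hs : (Real.sqrt q.1) ^ 2 = q.1 := Real.sq_sqrt hx.le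
    have h4 : (Real.sqrt q.1) ^ (4:ℕ) = q.1 ^ 2 := by
      rw [show (4:ℕ) = 2 * 2 from rfl, pow_mul, hs]
    rw [Real.norm_eq_abs, abs_of_nonneg (Real.sqrt_nonneg _),
      show (4:ℝ) = ((4:ℕ):ℝ) by norm_num, Real.rpow_natCast, h4]
  · apply cusp_memLp_of_integrable
      (by exact (measurable_const.div
          (measurable_const.mul (Real.continuous_sqrt.measurable.comp measurable_fst))).aestronglyMeasurable :
        AEStronglyMeasurable (fun q : ℝ × ℝ => 1 / (2 * Real.sqrt q.1))
          (volume.restrict cuspΩ))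
      _ cusp_integrableOn_inv_sq
    intro q hq
    have hx : 0 < q.1 := hq.2.2.1
    have hs0 : 0 < Real.sqrt q.1 := Real.sqrt_pos.mpr hx
    have hs : (Real.sqrt q.1) ^ 2 = q.1 := Real.sq_sqrt hx.le
    have h4 : (Real.sqrt q.1) ^ (4:ℕ) = q.1 ^ 2 := by
      rw [show (4:ℕ) = 2 * 2 from rfl, pow_mul, hs]
    rw [Real.norm_eq_abs, abs_of_nonneg (by positivity),
      show (4:ℝ) = ((4:ℕ):ℝ) by norm_num, Real.rpow_natCast,
      div_pow, mul_pow, h4, one_pow]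
    have hx0 : q.1 ≠ 0 := ne_of_gt hx
    field_simp
    ring
end
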